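/- For every vector v ∈ ℝⁿ (not necessarily nonnegative), the Hadamard exponential exp_H(v vᵀ), with entries exp(v_i v_j), is completely positive. -/

import Mathlib

open Matrix

namespace HadamardExpCPAux

open Finset Filter Real

/-- An exponential sum with `m` strictly increasing frequencies that vanishes at `m`
strictly increasing points has all coefficients zero. -/
lemma expsum_coeffs_eq_zero :
    ∀ (m : ℕ) (b c z : ℕ → ℝ),
      (∀ i j, i < j → j < m → b i < b j) →
      (∀ i j, i < j → j < m → z i < z j) →
      (∀ i, i < m → ∑ l ∈ Finset.range m, c l * Real.exp (b l * z i) = 0) →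
      ∀ l, l < m → c l = 0 := by
  intro m
  induction m with
  | zero => intro _ _ _ _ _ _ l hl; omega
  | succ m ih =>
    intro b c z hb hz h0
    set F : ℝ → ℝ := fun t => ∑ l ∈ Finset.range (m+1), c l * Real.exp ((b l - b m) * t)
      with hFdef
    have hder : ∀ t : ℝ, HasDerivAt F
        (∑ l ∈ Finset.range (m+1), c l * (b l - b m) * Real.exp ((b l - b m) * t)) t := by
      intro t
      apply HasDerivAt.fun_sum
      intro l _
      have h1 : HasDerivAt (fun s : ℝ => (b l - b m) * s) (b l - b m) t := by
        simpa using (hasDerivAt_id t).const_mul (b l - b m)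
      have h3 := h1.exp.const_mul (c l)
      convert h3 using 1 <;> first | rfl | ring
    have hdiff : Differentiable ℝ F := fun t => (hder t).differentiableAt
    have hFz : ∀ i, i < m + 1 → F (z i) = 0 := by
      intro i hi
      have key : F (z i)
          = Real.exp (-(b m * z i)) * ∑ l ∈ Finset.range (m+1), c l * Real.exp (b l * z i) := by
        rw [Finset.mul_sum]
        refine Finset.sum_congr rfl fun l _ => ?_
        rw [show (b l - b m) * z i = b l * z i + -(b m * z i) by ring, Real.exp_add]
        ring
      rw [key, h0 i hi, mul_zero]
    -- Rolle
    have rolle : ∀ i : ℕ, ∃ y : ℝ, i < m →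
        y ∈ Set.Ioo (z i) (z (i+1)) ∧ deriv F y = 0 := by
      intro i
      by_cases hi : i < m
      · have hzi : z i < z (i+1) := hz i (i+1) (by omega) (by omega)
        obtain ⟨y, hy1, hy2⟩ := exists_deriv_eq_zero hzi hdiff.continuous.continuousOn
          (by rw [hFz i (by omega), hFz (i+1) (by omega)])
        exact ⟨y, fun _ => ⟨hy1, hy2⟩⟩
      · exact ⟨0, fun h => absurd h hi⟩
    choose y hy using rolle
    have hcm : ∀ l, l < m → c l = 0 := by
      intro l hl
      have hmono : ∀ i j, i < j → j < m → y i < y j := by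
        intro i j hij hj
        have h1 := (hy i (by omega)).1
        have h2 := (hy j hj).1
        calc y i < z (i+1) := h1.2
          _ ≤ z j := by
              rcases eq_or_lt_of_le (show i + 1 ≤ j by omega) with h | h
              · rw [h]
              · exact (hz (i+1) j h (by omega)).le
          _ < y j := h2.1
      have hzero : ∀ i, i < m →
          ∑ l ∈ Finset.range m, (c l * (b l - b m)) * Real.exp ((b l - b m) * y i) = 0 := by
        intro i hi
        have hd := (hder (y i)).deriv
        have := (hy i hi).2
        rw [hd, Finset.sum_range_succ] at this
        simpa using this
      have hb' : ∀ i j, i < j → j < m → b i - b m < b j - b m := by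
        intro i j hij hj
        have := hb i j hij (by omega)
        linarith
      have := ih (fun l => b l - b m) (fun l => c l * (b l - b m)) y hb' hmono hzero l hl
      have hbl : b l - b m ≠ 0 := by
        have := hb l m hl (by omega); linarith
      exact (mul_eq_zero.mp this).resolve_right hbl
    have hlast : c m = 0 := by
      have := h0 0 (by omega)
      rw [Finset.sum_range_succ] at this
      have hrest : ∑ j ∈ Finset.range m, c j * Real.exp (b j * z 0) = 0 :=
        Finset.sum_eq_zero fun j hj => by
          rw [hcm j (Finset.mem_range.mp hj), zero_mul]
      rw [hrest, zero_add] at this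
      exact (mul_eq_zero.mp this).resolve_right (Real.exp_ne_zero _)
    intro l hl
    rcases lt_or_eq_of_le (Nat.lt_succ_iff.mp hl) with h | h
    · exact hcm l h
    · rwa [h]

/-- An exponential sum with leading term `exp (x j * t)` and lower frequencies
`x 0 < … < x (k-1)`, vanishing at `x 0, …, x (k-1)`, is positive to the right of all
those points. -/
lemma expsum_pos (x : ℕ → ℝ) (hx : StrictMono x) (k j : ℕ) (hj : k ≤ j) (c : ℕ → ℝ)
    (h0 : ∀ i, i < k → Real.exp (x j * x i) + ∑ l ∈ range k, c l * Real.exp (x l * x i) = 0)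
    (t : ℝ) (ht : ∀ i, i < k → x i < t) :
    0 < Real.exp (x j * t) + ∑ l ∈ range k, c l * Real.exp (x l * t) := by
  set f : ℝ → ℝ := fun s => Real.exp (x j * s) + ∑ l ∈ range k, c l * Real.exp (x l * s)
    with hfdef
  show 0 < f t
  by_contra hle
  push_neg at hle
  have hcont : Continuous f := by
    apply Continuous.add
    · exact Real.continuous_exp.comp (continuous_const.mul continuous_id)
    · exact continuous_finset_sum _ fun l _ =>
        continuous_const.mul (Real.continuous_exp.comp (continuous_const.mul continuous_id))
  have hfact : ∀ s : ℝ, f s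
      = Real.exp (x j * s) * (1 + ∑ l ∈ range k, c l * Real.exp ((x l - x j) * s)) := by
    intro s
    simp only [hfdef]
    rw [mul_add, mul_one, Finset.mul_sum]
    congr 1
    refine Finset.sum_congr rfl fun l _ => ?_
    rw [show Real.exp (x j * s) * (c l * Real.exp ((x l - x j) * s))
        = c l * (Real.exp (x j * s) * Real.exp ((x l - x j) * s)) by ring,
      ← Real.exp_add, show x j * s + (x l - x j) * s = x l * s by ring]
  -- the bracketed factor tends to 1
  have hlim : Tendsto (fun s => 1 + ∑ l ∈ range k, c l * Real.exp ((x l - x j) * s))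
      atTop (nhds 1) := by
    have hsum : Tendsto (fun s => ∑ l ∈ range k, c l * Real.exp ((x l - x j) * s))
        atTop (nhds 0) := by
      have : (0:ℝ) = ∑ l ∈ range k, (0:ℝ) := by simp
      rw [this]
      refine tendsto_finset_sum _ fun l hl => ?_
      have hneg : 0 < x j - x l := by
        have : x l < x j := hx (lt_of_lt_of_le (Finset.mem_range.mp hl) hj)
        linarith
      have h1 : Tendsto (fun s : ℝ => (x l - x j) * s) atTop atBot := by
        rw [show (fun s : ℝ => (x l - x j) * s) = fun s : ℝ => -((x j - x l) * s) by
          funext s; ring]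
        rw [tendsto_neg_atBot_iff]
        exact Tendsto.const_mul_atTop hneg tendsto_id
      have := (Real.tendsto_exp_atBot.comp h1).const_mul (c l)
      simpa using this
    have := hsum.const_add (1:ℝ)
    simpa using this
  have hev : ∀ᶠ s in atTop,
      0 < 1 + ∑ l ∈ range k, c l * Real.exp ((x l - x j) * s) :=
    hlim.eventually (eventually_gt_nhds one_pos)
  obtain ⟨T, hT1, hT2⟩ := (hev.and (eventually_gt_atTop t)).exists
  have hfT : 0 < f T := by
    rw [hfact T]
    exact mul_pos (Real.exp_pos _) hT1
  -- IVT gives a zero t₁ ≥ t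
  obtain ⟨t₁, ht₁mem, ht₁⟩ := intermediate_value_Icc hT2.le hcont.continuousOn
    ⟨hle, hfT.le⟩
  -- contradiction via zero counting with k+1 frequencies and k+1 zeros
  set b' : ℕ → ℝ := fun l => if l < k then x l else x j
  set z' : ℕ → ℝ := fun i => if i < k then x i else t₁
  set c' : ℕ → ℝ := fun l => if l < k then c l else 1
  have hb' : ∀ i j', i < j' → j' < k + 1 → b' i < b' j' := by
    intro i j' hij hj'
    have hik : i < k := by omega
    simp only [b', if_pos hik]
    rcases lt_or_ge j' k with h | h
    · rw [if_pos h]; exact hx (by omega)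
    · rw [if_neg (by omega)]; exact hx (by omega)
  have hz' : ∀ i j', i < j' → j' < k + 1 → z' i < z' j' := by
    intro i j' hij hj'
    have hik : i < k := by omega
    simp only [z', if_pos hik]
    rcases lt_or_ge j' k with h | h
    · rw [if_pos h]; exact hx (by omega)
    · rw [if_neg (by omega)]
      exact lt_of_lt_of_le (ht i hik) ht₁mem.1
  have hzero' : ∀ i, i < k + 1 →
      ∑ l ∈ Finset.range (k+1), c' l * Real.exp (b' l * z' i) = 0 := by
    intro i hi
    rw [Finset.sum_range_succ]
    have hsum : ∑ l ∈ Finset.range k, c' l * Real.exp (b' l * z' i)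
        = ∑ l ∈ Finset.range k, c l * Real.exp (x l * z' i) := by
      refine Finset.sum_congr rfl fun l hl => ?_
      have := Finset.mem_range.mp hl
      simp only [b', c', if_pos this]
    rw [hsum]
    simp only [c', b', if_neg (lt_irrefl k)]
    rcases lt_or_ge i k with h | h
    · simp only [z', if_pos h]
      have := h0 i h
      linarith [h0 i h]
    · simp only [z', if_neg (by omega : ¬ i < k)]
      have : f t₁ = 0 := ht₁
      rw [hfdef] at this
      simp only at this
      linarith [this]
  have := expsum_coeffs_eq_zero (k+1) b' c' z' hb' hz' hzero' k (by omega)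
  simp only [c', if_neg (lt_irrefl k)] at this
  exact one_ne_zero this

/-- Iterated Schur-complement functions for the kernel `exp (x·y)` pivoting at
`x 0, x 1, …`. -/
noncomputable def gfun (x : ℕ → ℝ) : ℕ → ℕ → ℝ → ℝ
  | 0, j, t => Real.exp (x j * t)
  | k+1, j, t => gfun x k j t - gfun x k j (x k) / gfun x k k (x k) * gfun x k k t

lemma gfun_spec (x : ℕ → ℝ) (hx : StrictMono x) (k : ℕ) :
    (∀ j, k ≤ j → ∀ i, i < k → gfun x k j (x i) = 0) ∧
    (∀ j, k ≤ j → ∃ c : ℕ → ℝ, ∀ t, gfun x k j t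
        = Real.exp (x j * t) + ∑ l ∈ range k, c l * Real.exp (x l * t)) ∧
    (∀ i j, k ≤ i → k ≤ j → gfun x k j (x i) = gfun x k i (x j)) := by
  induction k with
  | zero =>
    refine ⟨fun j _ i hi => by omega, fun j _ => ⟨0, fun t => by simp [gfun]⟩,
      fun i j _ _ => ?_⟩
    simp [gfun, mul_comm]
  | succ k ih =>
    obtain ⟨hA, hB, hD⟩ := ih
    have hpos : ∀ j, k ≤ j → ∀ t : ℝ, (∀ i, i < k → x i < t) → 0 < gfun x k j t := by
      intro j hj t ht
      obtain ⟨c, hc⟩ := hB j hj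
      rw [hc]
      refine expsum_pos x hx k j hj c (fun i hi => ?_) t ht
      rw [← hc (x i)]
      exact hA j hj i hi
    have hpiv : 0 < gfun x k k (x k) :=
      hpos k le_rfl (x k) fun i hi => hx hi
    have hpiv' : gfun x k k (x k) ≠ 0 := ne_of_gt hpiv
    refine ⟨?_, ?_, ?_⟩
    · -- vanishing
      intro j hj i hi
      show gfun x k j (x i) - gfun x k j (x k) / gfun x k k (x k) * gfun x k k (x i) = 0
      rcases lt_or_ge i k with h | h
      · rw [hA j (by omega) i h, hA k le_rfl i h]
        ring
      · have hik : i = k := by omega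
        subst hik
        field_simp; ring
    · -- form
      intro j hj
      obtain ⟨c1, h1⟩ := hB j (by omega)
      obtain ⟨c2, h2⟩ := hB k le_rfl
      set r := gfun x k j (x k) / gfun x k k (x k) with hr
      refine ⟨fun l => if l < k then c1 l - r * c2 l else -r, fun t => ?_⟩
      show gfun x k j t - r * gfun x k k t = _
      have hsum : ∑ l ∈ range k, (if l < k then c1 l - r * c2 l else -r) * Real.exp (x l * t)
          = (∑ l ∈ range k, c1 l * Real.exp (x l * t))
            - r * ∑ l ∈ range k, c2 l * Real.exp (x l * t) := by
        rw [Finset.mul_sum, ← Finset.sum_sub_distrib]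
        refine Finset.sum_congr rfl fun l hl => ?_
        rw [if_pos (Finset.mem_range.mp hl)]; ring
      rw [h1 t, h2 t, Finset.sum_range_succ]
      beta_reduce
      rw [if_neg (lt_irrefl k), hsum]
      ring
    · -- symmetry
      intro i j hi hj
      show gfun x k j (x i) - gfun x k j (x k) / gfun x k k (x k) * gfun x k k (x i)
        = gfun x k i (x j) - gfun x k i (x k) / gfun x k k (x k) * gfun x k k (x j)
      rw [hD i j (by omega) (by omega), hD i k (by omega) le_rfl,
        hD j k (by omega) le_rfl]
      ring

lemma gfun_pos (x : ℕ → ℝ) (hx : StrictMono x) (k j : ℕ) (hj : k ≤ j)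
    (t : ℝ) (ht : ∀ i, i < k → x i < t) : 0 < gfun x k j t := by
  obtain ⟨hA, hB, _⟩ := gfun_spec x hx k
  obtain ⟨c, hc⟩ := hB j hj
  rw [hc]
  refine expsum_pos x hx k j hj c (fun i hi => ?_) t ht
  rw [← hc (x i)]
  exact hA j hj i hi


lemma gfun_eval_pos (x : ℕ → ℝ) (hx : StrictMono x) {k i j : ℕ}
    (hi : k ≤ i) (hj : k ≤ j) : 0 < gfun x k j (x i) :=
  gfun_pos x hx k j hj (x i) fun l hl => hx (lt_of_lt_of_le hl hi)

/-- The (extended) nonnegative Cholesky factor of the kernel matrix `exp (x i * x j)`. -/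
noncomputable def Lmat (x : ℕ → ℝ) (i k : ℕ) : ℝ :=
  if k ≤ i then gfun x k i (x k) / Real.sqrt (gfun x k k (x k)) else 0

lemma Lmat_nonneg (x : ℕ → ℝ) (hx : StrictMono x) (i k : ℕ) : 0 ≤ Lmat x i k := by
  unfold Lmat
  split
  · exact div_nonneg (gfun_eval_pos x hx le_rfl (by assumption)).le (Real.sqrt_nonneg _)
  · exact le_rfl

lemma Lmat_mul (x : ℕ → ℝ) (hx : StrictMono x) {i j k : ℕ} (hki : k ≤ i) (hkj : k ≤ j) :
    Lmat x i k * Lmat x j k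
      = gfun x k i (x k) * gfun x k j (x k) / gfun x k k (x k) := by
  unfold Lmat
  rw [if_pos hki, if_pos hkj, div_mul_div_comm,
    Real.mul_self_sqrt (gfun_eval_pos x hx le_rfl le_rfl).le]

lemma sum_Lmat (x : ℕ → ℝ) (hx : StrictMono x) (i j d : ℕ) (hij : i ≤ j) (hid : i < d) :
    ∑ k ∈ range d, Lmat x i k * Lmat x j k = Real.exp (x i * x j) := by
  have tel : ∀ K, K ≤ i → ∑ k ∈ range K, Lmat x i k * Lmat x j k
      = Real.exp (x i * x j) - gfun x K j (x i) := by
    intro K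
    induction K with
    | zero =>
      intro _
      show (0:ℝ) = Real.exp (x i * x j) - Real.exp (x j * x i)
      rw [mul_comm]; ring
    | succ K ihK =>
      intro hK
      have hKi : K ≤ i := by omega
      have hKj : K ≤ j := by omega
      have hsym : gfun x K K (x i) = gfun x K i (x K) :=
        (gfun_spec x hx K).2.2 i K hKi le_rfl
      have hdef : gfun x (K+1) j (x i)
          = gfun x K j (x i) - gfun x K j (x K) / gfun x K K (x K) * gfun x K K (x i) := rfl
      rw [Finset.sum_range_succ, ihK (by omega), Lmat_mul x hx hKi hKj, hdef, hsym]
      have hp := (gfun_eval_pos x hx (le_rfl : K ≤ K) (le_rfl : K ≤ K)).ne'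
      field_simp
      ring
  have htail : ∑ k ∈ range d, Lmat x i k * Lmat x j k
      = ∑ k ∈ range (i+1), Lmat x i k * Lmat x j k := by
    symm
    refine Finset.sum_subset (Finset.range_subset_range.mpr (by omega)) fun k hk hk' => ?_
    have : ¬ k ≤ i := by
      simp only [Finset.mem_range] at hk hk'; omega
    unfold Lmat
    rw [if_neg this, zero_mul]
  rw [htail, Finset.sum_range_succ, tel i le_rfl, Lmat_mul x hx le_rfl hij]
  have hp : gfun x i i (x i) ≠ 0 := (gfun_eval_pos x hx (le_rfl : i ≤ i) le_rfl).ne'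
  field_simp; ring

end HadamardExpCPAux

open HadamardExpCPAux Finset Filter Real in
/-- For every vector `v` (not necessarily nonnegative), the Hadamard exponential
`exp_H(v vᵀ)` is completely positive. -/
theorem hadamard_exp_vecMulVec_completelyPositive (n : ℕ) (v : Fin n → ℝ) :
    ∃ (k : ℕ) (U : Matrix (Fin n) (Fin k) ℝ),
      (∀ i j, 0 ≤ U i j) ∧
      Matrix.of (fun i j => Real.exp (v i * v j)) = U * Uᵀ := by
  rcases Nat.eq_zero_or_pos n with hn | hn
  · subst hn
    exact ⟨0, 0, fun i j => le_rfl, by ext i j; exact i.elim0⟩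
  -- the set of values, sorted
  set T : Finset ℝ := Finset.univ.image v with hT
  have hTne : T.Nonempty := ⟨v ⟨0, hn⟩, Finset.mem_image.mpr ⟨⟨0, hn⟩, Finset.mem_univ _, rfl⟩⟩
  set d : ℕ := T.card with hd
  have hd0 : 0 < d := Finset.card_pos.mpr hTne
  set e : Fin d ≃o {y // y ∈ T} := T.orderIsoOfFin rfl with he
  set E : ℝ := (e ⟨d - 1, by omega⟩ : ℝ) with hE
  -- strictly monotone global extension of the sorted list of values
  set x : ℕ → ℝ := fun m => if h : m < d then (e ⟨m, h⟩ : ℝ) else E + m - d + 1 with hxdef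
  have hx : StrictMono x := by
    apply strictMono_nat_of_lt_succ
    intro m
    by_cases h1 : m + 1 < d
    · have h0 : m < d := by omega
      simp only [hxdef, dif_pos h1, dif_pos h0]
      exact_mod_cast e.strictMono (show (⟨m, h0⟩ : Fin d) < ⟨m+1, h1⟩ by
        simp [Fin.mk_lt_mk])
    · by_cases h0 : m < d
      · have hmd : m = d - 1 := by omega
        simp only [hxdef, dif_pos h0, dif_neg h1]
        have hfin : (⟨m, h0⟩ : Fin d) = ⟨d - 1, by omega⟩ := Fin.ext hmd
        rw [hfin, ← hE]
        have : (m:ℝ) + 1 = d := by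
          have : m + 1 = d := by omega
          exact_mod_cast congrArg (Nat.cast : ℕ → ℝ) this
        rw [show E + (↑(m+1) : ℝ) - d + 1 = E + ((m:ℝ) + 1 - d) + 1 by push_cast; ring, this]
        simp
      · simp only [hxdef, dif_neg h0, dif_neg h1]
        push_cast
        linarith
  -- index map
  have hmem : ∀ i : Fin n, v i ∈ T := fun i => Finset.mem_image.mpr ⟨i, Finset.mem_univ _, rfl⟩
  set σ : Fin n → ℕ := fun i => (e.symm ⟨v i, hmem i⟩ : Fin d) with hσ
  have hσd : ∀ i, σ i < d := fun i => (e.symm ⟨v i, hmem i⟩).2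
  have hxσ : ∀ i, x (σ i) = v i := by
    intro i
    simp only [hxdef, hσ, dif_pos (hσd i)]
    have : (⟨(e.symm ⟨v i, hmem i⟩ : Fin d), hσd i⟩ : Fin d) = e.symm ⟨v i, hmem i⟩ :=
      Fin.ext rfl
    rw [dif_pos (show ((e.symm ⟨v i, hmem i⟩ : Fin d) : ℕ) < d from hσd i), this, OrderIso.apply_symm_apply]
  refine ⟨d, Matrix.of (fun i k => Lmat x (σ i) k), fun i k => Lmat_nonneg x hx _ _, ?_⟩
  ext i j
  simp only [Matrix.of_apply, Matrix.mul_apply, Matrix.transpose_apply]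
  rw [Fin.sum_univ_eq_sum_range (fun k => Lmat x (σ i) k * Lmat x (σ j) k) d]
  rcases le_total (σ i) (σ j) with hle | hle
  · rw [sum_Lmat x hx (σ i) (σ j) d hle (hσd i), hxσ, hxσ]
  · have : ∑ k ∈ range d, Lmat x (σ i) k * Lmat x (σ j) k
        = ∑ k ∈ range d, Lmat x (σ j) k * Lmat x (σ i) k :=
      Finset.sum_congr rfl fun k _ => mul_comm _ _
    rw [this, sum_Lmat x hx (σ j) (σ i) d hle (hσd j), hxσ, hxσ, mul_comm]
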